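/- Let ρ ∈ (0,1), k ≥ 1 and ν ∈ ℝ^k with ν_1 ≥ ν_2 ≥ ⋯ ≥ ν_k. Let m(x) = φ(x)/Φ(x) be the inverse Mill's ratio and define H(t) = Σ_{j=1}^{k} m((t − ν_j)/√(1−ρ)) / m((t − ν_k)/√(1−ρ)) for t ∈ ℝ. Then H is differentiable with H'(t) ≥ 0 for all t ∈ ℝ, with strict inequality unless ν_1 = ν_2 = ⋯ = ν_k. -/

import Mathlib

open MeasureTheory ProbabilityTheory Filter
open scoped ENNReal

/-- The standard normal cumulative distribution function `Φ`. -/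
noncomputable def Phi (x : ℝ) : ℝ := ((gaussianReal 0 1) (Set.Iic x)).toReal

/-- The standard normal probability density function `φ`. -/
noncomputable def phiPDF (x : ℝ) : ℝ := gaussianPDFReal 0 1 x

/-- The joint law of `n` independent standard normal random variables. -/
noncomputable def stdGaussianPi (n : ℕ) : Measure (Fin n → ℝ) :=
  Measure.pi fun _ => gaussianReal 0 1

/-- The intraclass-correlation multivariate Gaussian vector `X ~ N(μ, Σ)` with
`Σ_{ij} = ρ + (1-ρ)δ_{ij}`, realized as `X_i = μ_i + √ρ Y_0 + √(1-ρ) Y_i` where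
`Y_0, …, Y_k` are independent standard normals (the coordinates of `ω`). -/
noncomputable def Xvec (ρ : ℝ) {k : ℕ} (μ : Fin k → ℝ) (i : Fin k) (ω : Fin (k+1) → ℝ) : ℝ :=
  μ i + Real.sqrt ρ * ω 0 + Real.sqrt (1-ρ) * ω i.succ

/-- The cumulative distribution function of `X* = max {X_1, …, X_k}`. -/
noncomputable def Fstar (ρ : ℝ) {k : ℕ} (μ : Fin k → ℝ) (x : ℝ) : ℝ :=
  (stdGaussianPi (k+1) {ω | (⨆ i, Xvec ρ μ i ω) ≤ x}).toReal

/-- The inverse Mill's ratio `m(x) = φ(x)/Φ(x)`. -/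
noncomputable def mills (x : ℝ) : ℝ := phiPDF x / Phi x

section Aux
open Real


lemma phiPDF_pos (x : ℝ) : 0 < phiPDF x := gaussianPDFReal_pos 0 1 x one_ne_zero

lemma phiPDF_cont : Continuous phiPDF := by
  unfold phiPDF gaussianPDFReal
  continuity

lemma phiPDF_integrable : Integrable phiPDF := integrable_gaussianPDFReal 0 1

lemma Phi_eq (x : ℝ) : Phi x = ∫ t in Set.Iic x, phiPDF t := by
  unfold Phi
  rw [gaussianReal_apply_eq_integral 0 one_ne_zero, ENNReal.toReal_ofReal]
  · rfl
  · exact setIntegral_nonneg measurableSet_Iic fun t _ => (gaussianPDFReal_pos 0 1 t one_ne_zero).le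

lemma Phi_pos (x : ℝ) : 0 < Phi x := by
  rw [Phi_eq]
  have : (0:ℝ) < ∫ t in Set.Ioc (x-1) x, phiPDF t := by
    rw [← intervalIntegral.integral_of_le (by linarith : x - 1 ≤ x)]
    exact intervalIntegral.intervalIntegral_pos_of_pos_on
      (phiPDF_integrable.intervalIntegrable) (fun t _ => phiPDF_pos t) (by linarith)
  refine lt_of_lt_of_le this ?_
  exact setIntegral_mono_set phiPDF_integrable.integrableOn
    (ae_of_all _ fun t => (phiPDF_pos t).le)
    (ae_of_all _ fun t ht => ht.2)

lemma hasDerivAt_Phi (x : ℝ) : HasDerivAt Phi (phiPDF x) x := by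
  have h : ∀ y : ℝ, Phi y = Phi 0 + ∫ t in (0:ℝ)..y, phiPDF t := by
    intro y
    rw [Phi_eq, Phi_eq, ← intervalIntegral.integral_Iic_sub_Iic
      phiPDF_integrable.integrableOn phiPDF_integrable.integrableOn]
    ring
  have : HasDerivAt (fun y => Phi 0 + ∫ t in (0:ℝ)..y, phiPDF t) (phiPDF x) x := by
    refine HasDerivAt.const_add _ ?_
    exact intervalIntegral.integral_hasDerivAt_right
      (phiPDF_integrable.intervalIntegrable)
      (phiPDF_cont.aestronglyMeasurable.stronglyMeasurableAtFilter)
      phiPDF_cont.continuousAt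
  exact this.congr_of_eventuallyEq (Eventually.of_forall h) -- careful direction


lemma phiPDF_eq (x : ℝ) : phiPDF x = (Real.sqrt (2*π))⁻¹ * Real.exp (-x^2/2) := by
  simp [phiPDF, gaussianPDFReal]

lemma tendsto_phiPDF_atBot : Tendsto phiPDF atBot (nhds 0) := by
  apply squeeze_zero_norm' (a := fun x => (Real.sqrt (2*π))⁻¹ * Real.exp x)
  · filter_upwards [eventually_le_atBot (-2 : ℝ)] with x hx
    rw [phiPDF_eq, norm_mul, norm_inv]
    have h1 : -x^2/2 ≤ x := by nlinarith
    have : |Real.exp (-x^2/2)| ≤ Real.exp x := by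
      rw [abs_of_pos (Real.exp_pos _)]
      exact Real.exp_le_exp.2 h1
    have hc : |(Real.sqrt (2*π))| = Real.sqrt (2*π) := abs_of_nonneg (Real.sqrt_nonneg _)
    rw [Real.norm_eq_abs, hc]
    exact mul_le_mul_of_nonneg_left this (by positivity)
  · have := Real.tendsto_exp_atBot.const_mul (Real.sqrt (2*π))⁻¹
    simpa using this

lemma tendsto_mul_phiPDF_atBot : Tendsto (fun x => x * phiPDF x) atBot (nhds 0) := by
  apply squeeze_zero_norm' (a := fun x => (Real.sqrt (2*π))⁻¹ * (-x * Real.exp x))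
  · filter_upwards [eventually_le_atBot (-2 : ℝ)] with x hx
    rw [phiPDF_eq]
    have h1 : -x^2/2 ≤ x := by nlinarith
    have hex : Real.exp (-x^2/2) ≤ Real.exp x := Real.exp_le_exp.2 h1
    have : ‖x * ((Real.sqrt (2*π))⁻¹ * Real.exp (-x^2/2))‖
        = (Real.sqrt (2*π))⁻¹ * (|x| * Real.exp (-x^2/2)) := by
      rw [norm_mul, norm_mul, Real.norm_eq_abs, Real.norm_eq_abs, Real.norm_eq_abs,
        abs_of_nonneg (by positivity : (0:ℝ) ≤ (Real.sqrt (2*π))⁻¹),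
        abs_of_pos (Real.exp_pos _)]
      ring
    rw [this]
    have hax : |x| = -x := abs_of_neg (by linarith)
    rw [hax]
    apply mul_le_mul_of_nonneg_left _ (by positivity)
    exact mul_le_mul_of_nonneg_left hex (by linarith)
  · have h0 : Tendsto (fun y : ℝ => y * Real.exp (-y)) atTop (nhds 0) := by
      simpa using tendsto_pow_mul_exp_neg_atTop_nhds_zero 1
    have h1 : Tendsto (fun x : ℝ => -x * Real.exp x) atBot (nhds 0) := by
      have := h0.comp tendsto_neg_atBot_atTop
      have he : ((fun y => y * rexp (-y)) ∘ Neg.neg) = fun x : ℝ => -x * Real.exp x := by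
        ext x; simp [Function.comp]
      rwa [he] at this
    simpa using h1.const_mul (Real.sqrt (2*π))⁻¹

lemma Phi_add (y : ℝ) : Phi y = Phi 0 + ∫ t in (0:ℝ)..y, phiPDF t := by
  rw [Phi_eq, Phi_eq, ← intervalIntegral.integral_Iic_sub_Iic
    phiPDF_integrable.integrableOn phiPDF_integrable.integrableOn]
  ring

lemma tendsto_Phi_atBot : Tendsto Phi atBot (nhds 0) := by
  have h : Tendsto (fun y : ℝ => ∫ t in y..(0:ℝ), phiPDF t) atBot
      (nhds (∫ t in Set.Iic (0:ℝ), phiPDF t)) :=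
    intervalIntegral_tendsto_integral_Iic 0 phiPDF_integrable.integrableOn tendsto_id
  have h2 : Tendsto (fun y : ℝ => Phi 0 - ∫ t in y..(0:ℝ), phiPDF t) atBot
      (nhds (Phi 0 - ∫ t in Set.Iic (0:ℝ), phiPDF t)) := (tendsto_const_nhds).sub h
  have he : (fun y : ℝ => Phi 0 - ∫ t in y..(0:ℝ), phiPDF t) = Phi := by
    ext y
    rw [Phi_add y, intervalIntegral.integral_symm]
    ring
  rw [he] at h2
  have : Phi 0 - ∫ t in Set.Iic (0:ℝ), phiPDF t = 0 := by rw [← Phi_eq]; ring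
  rwa [this] at h2
lemma hasDerivAt_phiPDF (x : ℝ) : HasDerivAt phiPDF (-x * phiPDF x) x := by
  have h1 : HasDerivAt (fun y : ℝ => -y^2/2) (-x) x := by
    have := ((hasDerivAt_pow 2 x).neg).div_const 2
    refine this.congr_deriv ?_
    simp
    ring
  have h2 := (h1.exp).const_mul (Real.sqrt (2*π))⁻¹
  have he : (fun y : ℝ => (Real.sqrt (2*π))⁻¹ * Real.exp (-y^2/2)) = phiPDF := by
    ext y; rw [phiPDF_eq]
  rw [he] at h2
  refine h2.congr_deriv ?_
  rw [phiPDF_eq]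
  ring


noncomputable def hfun (x : ℝ) : ℝ := Phi x + x * phiPDF x / (1 + x^2)

lemma one_add_sq_pos (x : ℝ) : (0:ℝ) < 1 + x^2 := by positivity

lemma hasDerivAt_hfun (x : ℝ) : HasDerivAt hfun (2 * phiPDF x / (1+x^2)^2) x := by
  have hN : HasDerivAt (fun y : ℝ => y * phiPDF y)
      (1 * phiPDF x + x * (-x * phiPDF x)) x :=
    (hasDerivAt_id x).mul (hasDerivAt_phiPDF x)
  have hD : HasDerivAt (fun y : ℝ => 1 + y^2) (0 + 2*x^(2-1)) x :=
    (hasDerivAt_const x 1).add (hasDerivAt_pow 2 x)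
  have hq := hN.div hD (one_add_sq_pos x).ne'
  have h := (hasDerivAt_Phi x).add hq
  refine h.congr_deriv ?_
  have h1 : (1+x^2) ≠ 0 := (one_add_sq_pos x).ne'
  field_simp
  ring

lemma tendsto_hfun_atBot : Tendsto hfun atBot (nhds 0) := by
  have h2 : Tendsto (fun x : ℝ => x * phiPDF x / (1 + x^2)) atBot (nhds 0) := by
    apply squeeze_zero_norm' (a := fun x => ‖x * phiPDF x‖)
    · filter_upwards with x
      rw [norm_div]
      have h1 : (1:ℝ) ≤ ‖1 + x^2‖ := by
        rw [Real.norm_eq_abs, abs_of_pos (one_add_sq_pos x)]; nlinarith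
      calc ‖x * phiPDF x‖ / ‖1+x^2‖ ≤ ‖x * phiPDF x‖ / 1 :=
            div_le_div_of_nonneg_left (norm_nonneg _) one_pos h1
        _ = ‖x * phiPDF x‖ := by ring
    · simpa using tendsto_mul_phiPDF_atBot.norm
  have h3 := tendsto_Phi_atBot.add h2; rw [add_zero] at h3; exact h3

lemma hfun_pos (x : ℝ) : 0 < hfun x := by
  have hmono : StrictMono hfun :=
    strictMono_of_hasDerivAt_pos hasDerivAt_hfun (fun x => div_pos (mul_pos two_pos (phiPDF_pos x)) (pow_pos (one_add_sq_pos x) 2))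
  have hnn : ∀ y, 0 ≤ hfun y := by
    intro y
    refine le_of_tendsto tendsto_hfun_atBot ?_
    filter_upwards [eventually_le_atBot y] with z hz
    exact hmono.monotone hz
  calc (0:ℝ) ≤ hfun (x-1) := hnn _
    _ < hfun x := hmono (by linarith)

noncomputable def gfun (x : ℝ) : ℝ := Phi x^2 - x * phiPDF x * Phi x - phiPDF x^2

lemma hasDerivAt_gfun (x : ℝ) :
    HasDerivAt gfun (phiPDF x * ((1+x^2) * hfun x)) x := by
  have h1 : HasDerivAt (fun y : ℝ => Phi y^2) (2 * Phi x ^(2-1) * phiPDF x) x :=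
    (hasDerivAt_Phi x).pow 2
  have h2 : HasDerivAt (fun y : ℝ => y * phiPDF y * Phi y)
      ((1 * phiPDF x + x * (-x * phiPDF x)) * Phi x + x * phiPDF x * phiPDF x) x :=
    ((hasDerivAt_id x).mul (hasDerivAt_phiPDF x)).mul (hasDerivAt_Phi x)
  have h3 : HasDerivAt (fun y : ℝ => phiPDF y^2) (2 * phiPDF x ^(2-1) * (-x * phiPDF x)) x :=
    (hasDerivAt_phiPDF x).pow 2
  have h := (h1.sub h2).sub h3
  refine h.congr_deriv ?_
  unfold hfun
  have hne : (1+x^2) ≠ 0 := (one_add_sq_pos x).ne'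
  field_simp
  ring

lemma tendsto_gfun_atBot : Tendsto gfun atBot (nhds 0) := by
  have h1 := tendsto_Phi_atBot.mul tendsto_Phi_atBot
  have h2 := tendsto_mul_phiPDF_atBot.mul tendsto_Phi_atBot
  have h3 := tendsto_phiPDF_atBot.mul tendsto_phiPDF_atBot
  have := (h1.sub h2).sub h3
  simp only [mul_zero, sub_zero, zero_mul] at this
  have he : (fun x => Phi x * Phi x - x * phiPDF x * Phi x - phiPDF x * phiPDF x) = gfun := by
    ext x; unfold gfun; ring
  rwa [he] at this

lemma gfun_pos (x : ℝ) : 0 < gfun x := by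
  have hmono : StrictMono gfun :=
    strictMono_of_hasDerivAt_pos hasDerivAt_gfun
      (fun x => mul_pos (phiPDF_pos x) (mul_pos (one_add_sq_pos x) (hfun_pos x)))
  have hnn : ∀ y, 0 ≤ gfun y := by
    intro y
    refine le_of_tendsto tendsto_gfun_atBot ?_
    filter_upwards [eventually_le_atBot y] with z hz
    exact hmono.monotone hz
  calc (0:ℝ) ≤ gfun (x-1) := hnn _
    _ < gfun x := hmono (by linarith)

lemma mills_pos (x : ℝ) : 0 < mills x := div_pos (phiPDF_pos x) (Phi_pos x)

lemma hasDerivAt_mills (x : ℝ) :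
    HasDerivAt mills (-(x * mills x) - mills x ^ 2) x := by
  have h := (hasDerivAt_phiPDF x).div (hasDerivAt_Phi x) (Phi_pos x).ne'
  have he : phiPDF / Phi = mills := rfl
  rw [he] at h
  refine h.congr_deriv ?_
  unfold mills
  have := (Phi_pos x).ne'
  field_simp

lemma strictMono_add_mills : StrictMono (fun x : ℝ => x + mills x) := by
  apply strictMono_of_hasDerivAt_pos (f' := fun x => gfun x / Phi x ^ 2)
  · intro x
    have h := (hasDerivAt_id x).add (hasDerivAt_mills x)
    refine h.congr_deriv ?_
    unfold gfun mills
    have := (Phi_pos x).ne'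
    field_simp
    ring
  · intro x
    exact div_pos (gfun_pos x) (pow_pos (Phi_pos x) 2)

end Aux

/-- With `ν_1 ≥ ⋯ ≥ ν_k`, the function
`H(t) = ∑_j m((t-ν_j)/√(1-ρ)) / m((t-ν_k)/√(1-ρ))` is differentiable with
`H'(t) ≥ 0` for every `t`, strictly positive unless `ν_1 = ν_2 = ⋯ = ν_k`.
(Here `k = n + 1 ≥ 1` and the last coordinate plays the role of `ν_k`.) -/
theorem stmt17 (n : ℕ) (ρ : ℝ) (hρ : ρ ∈ Set.Ioo (0:ℝ) 1)
    (ν : Fin (n+1) → ℝ) (hord : ∀ i j : Fin (n+1), i ≤ j → ν j ≤ ν i) :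
    ∀ t : ℝ, ∃ d : ℝ,
      HasDerivAt (fun u => ∑ j, mills ((u - ν j) / Real.sqrt (1-ρ)) /
          mills ((u - ν (Fin.last n)) / Real.sqrt (1-ρ))) d t ∧
      0 ≤ d ∧ (¬ (∀ i j : Fin (n+1), ν i = ν j) → 0 < d) := by
  intro t
  obtain ⟨hρ0, hρ1⟩ := hρ
  set s : ℝ := Real.sqrt (1-ρ) with hs
  have hs0 : 0 < s := Real.sqrt_pos.2 (by linarith)
  set B : ℝ := (t - ν (Fin.last n)) / s with hB
  set A : Fin (n+1) → ℝ := fun j => (t - ν j) / s with hA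
  have hAB : ∀ j, A j ≤ B := by
    intro j
    have h := hord j (Fin.last n) (Fin.le_last j)
    show (t - ν j)/s ≤ (t - ν (Fin.last n))/s
    gcongr
  -- derivative of inner affine maps
  have hinner : ∀ c : ℝ, HasDerivAt (fun u : ℝ => (u - c) / s) (1/s) t := by
    intro c
    simpa using ((hasDerivAt_id t).sub_const c).div_const s
  have hnum : ∀ j : Fin (n+1), HasDerivAt (fun u => mills ((u - ν j) / s))
      ((-((A j) * mills (A j)) - mills (A j) ^ 2) * (1/s)) t := by
    intro j
    exact (hasDerivAt_mills (A j)).comp t (hinner (ν j))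
  have hden : HasDerivAt (fun u => mills ((u - ν (Fin.last n)) / s))
      ((-(B * mills B) - mills B ^ 2) * (1/s)) t :=
    by exact (hasDerivAt_mills B).comp t (hinner (ν (Fin.last n)))
  set E : Fin (n+1) → ℝ := fun j =>
    mills (A j) / (s * mills B) * ((B + mills B) - (A j + mills (A j))) with hE
  have hterm : ∀ j : Fin (n+1),
      HasDerivAt (fun u => mills ((u - ν j) / s) / mills ((u - ν (Fin.last n)) / s)) (E j) t := by
    intro j
    have h := (hnum j).div hden (mills_pos B).ne'
    refine h.congr_deriv ?_
    have h1 : mills B ≠ 0 := (mills_pos B).ne'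
    have h2 : s ≠ 0 := hs0.ne'
    rw [show (t - ν (Fin.last n)) / s = B from rfl, show (t - ν j) / s = A j from rfl]
    simp only [hE]
    field_simp [hE]
    ring
  have hsum : HasDerivAt (fun u => ∑ j, mills ((u - ν j) / s) /
      mills ((u - ν (Fin.last n)) / s)) (∑ j, E j) t :=
    HasDerivAt.fun_sum (fun j _ => hterm j)
  have hEnn : ∀ j, 0 ≤ E j := by
    intro j
    apply mul_nonneg
    · exact (div_pos (mills_pos _) (mul_pos hs0 (mills_pos _))).le
    · have := strictMono_add_mills.monotone (hAB j)
      linarith [this]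
  refine ⟨∑ j, E j, hsum, Finset.sum_nonneg (fun j _ => hEnn j), ?_⟩
  intro hne
  have hlt : ν (Fin.last n) < ν 0 := by
    rcases lt_or_eq_of_le (hord 0 (Fin.last n) (Fin.zero_le _)) with h | h
    · exact h
    · exfalso
      apply hne
      intro i j
      have h1 := hord 0 i (Fin.zero_le _)
      have h2 := hord i (Fin.last n) (Fin.le_last _)
      have h3 := hord 0 j (Fin.zero_le _)
      have h4 := hord j (Fin.last n) (Fin.le_last _)
      linarith
  have hABlt : A 0 < B := by
    show (t - ν 0)/s < (t - ν (Fin.last n))/s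
    gcongr
  have h2 : A 0 + mills (A 0) < B + mills B := strictMono_add_mills hABlt
  have hE0 : 0 < E 0 :=
    mul_pos (div_pos (mills_pos _) (mul_pos hs0 (mills_pos _))) (by linarith)
  exact Finset.sum_pos' (fun j _ => hEnn j) ⟨0, Finset.mem_univ 0, hE0⟩
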